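/- For integers q ≥ 2, n ≥ 1 and 1 ≤ d ≤ n, we have A_q(n,d) · N_q(n, n−d+1) ≤ q^n. -/

import Mathlib

/-- `Aq q n d` is the maximum size of a code over an alphabet of `q` symbols with
length `n` and minimum Hamming distance at least `d`. -/
noncomputable def Aq (q n d : ℕ) : ℕ :=
  sSup {m | ∃ C : Finset (Fin n → Fin q), C.card = m ∧
    ∀ c ∈ C, ∀ c' ∈ C, c ≠ c' → d ≤ hammingDist c c'}

/-- `Nq q n s` is the maximum size of a set of words of length `n` over an alphabet of
`q` symbols such that any two words of the set agree in at least `s` positions. -/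
noncomputable def Nq (q n s : ℕ) : ℕ :=
  sSup {m | ∃ S : Finset (Fin n → Fin q), S.card = m ∧
    ∀ x ∈ S, ∀ y ∈ S, x ≠ y → s ≤ (Finset.univ.filter (fun i => x i = y i)).card}

/-- `A_q(n,d) · N_q(n, n−d+1) ≤ q^n`. -/
theorem Aq_mul_Nq_le (q n d : ℕ) (hq : 2 ≤ q) (hn : 1 ≤ n) (hd : 1 ≤ d) (hdn : d ≤ n) :
    Aq q n d * Nq q n (n - d + 1) ≤ q ^ n := by
  have hq0 : NeZero q := ⟨by omega⟩
  have hcardfun : (Finset.univ : Finset (Fin n → Fin q)).card = q ^ n := by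
    simp [Fintype.card_fun]
  have hA : Aq q n d ∈ {m | ∃ C : Finset (Fin n → Fin q), C.card = m ∧
      ∀ c ∈ C, ∀ c' ∈ C, c ≠ c' → d ≤ hammingDist c c'} := by
    apply Nat.sSup_mem
    · exact ⟨0, ∅, by simp⟩
    · exact ⟨q ^ n, fun m ⟨C, hC, _⟩ => hC ▸ (C.card_le_univ.trans_eq hcardfun)⟩
  have hN : Nq q n (n - d + 1) ∈ {m | ∃ S : Finset (Fin n → Fin q), S.card = m ∧
      ∀ x ∈ S, ∀ y ∈ S, x ≠ y →
        n - d + 1 ≤ (Finset.univ.filter (fun i => x i = y i)).card} := by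
    apply Nat.sSup_mem
    · exact ⟨0, ∅, by simp⟩
    · exact ⟨q ^ n, fun m ⟨S, hS, _⟩ => hS ▸ (S.card_le_univ.trans_eq hcardfun)⟩
  obtain ⟨C, hCcard, hC⟩ := hA
  obtain ⟨S, hScard, hS⟩ := hN
  rw [← hCcard, ← hScard, ← Finset.card_product, ← hcardfun]
  apply Finset.card_le_card_of_injOn (fun p => p.1 + p.2) (fun _ _ => Finset.mem_univ _)
  rintro ⟨c, x⟩ hcx ⟨c', x'⟩ hcx' h
  simp only [Finset.mem_coe, Finset.mem_product] at hcx hcx'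
  simp only at h
  have hiff : ∀ i, (c i = c' i ↔ x i = x' i) := by
    intro i
    have hi : c i + x i = c' i + x' i := congrFun h i
    constructor
    · intro he; rw [he] at hi; exact add_left_cancel hi
    · intro he; rw [he] at hi; exact add_right_cancel hi
  have hcc : c = c' := by
    by_contra hne
    have hxx : x ≠ x' := by
      intro hxe
      exact hne (funext fun i => (hiff i).mpr (by rw [hxe]))
    have h1 : d ≤ hammingDist c c' := hC c hcx.1 c' hcx'.1 hne
    have h2 := hS x hcx.2 x' hcx'.2 hxx
    have h3 : hammingDist c c' = hammingDist x x' := by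
      unfold hammingDist
      congr 1
      apply Finset.filter_congr
      intro i _
      simp [hiff i]
    have h4 : (Finset.univ.filter (fun i => x i = x' i)).card + hammingDist x x' = n := by
      have := Finset.card_filter_add_card_filter_not
        (s := (Finset.univ : Finset (Fin n))) (p := fun i => x i = x' i)
      simpa [hammingDist] using this
    omega
  have hxx : x = x' := funext fun i => (hiff i).mp (by rw [hcc])
  simp [hcc, hxx]
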